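/- If ψ : ℝ^{n-1} × ℝ → ℝ is Lip(1,1/2) with constant b, then the graph Σ_ψ = {(x, ψ(x,t), t)} is parabolic Ahlfors–David regular: there is M = M(n,b) ≥ 1 such that for every (X,t) ∈ Σ_ψ and r > 0, M^{-1} r^{n+1} ≤ H_p^{n+1}(Σ_ψ ∩ Q_r(X,t)) ≤ M r^{n+1}. -/

import Mathlib

open MeasureTheory
open scoped ENNReal NNReal

/-- Parabolic distance on `ℝⁿ × ℝ`. -/
noncomputable def pdist {n : ℕ} (p q : EuclideanSpace ℝ (Fin n) × ℝ) : ℝ :=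
  dist p.1 q.1 + Real.sqrt |p.2 - q.2|

/-- Parabolic cube of length `r` centered at `c`. -/
def pcube {n : ℕ} (c : EuclideanSpace ℝ (Fin n) × ℝ) (r : ℝ) :
    Set (EuclideanSpace ℝ (Fin n) × ℝ) :=
  {q | (∀ i, |q.1 i - c.1 i| < r) ∧ |q.2 - c.2| < r ^ 2}

/-- Parabolic diameter of a set. -/
noncomputable def pdiamS {n : ℕ} (A : Set (EuclideanSpace ℝ (Fin n) × ℝ)) : ℝ≥0∞ :=
  ⨆ (p) (_ : p ∈ A) (q) (_ : q ∈ A), ENNReal.ofReal (pdist p q)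

/-- Parabolic Hausdorff pre-measure at scale `δ`. -/
noncomputable def pHausPre {n : ℕ} (η : ℝ) (δ : ℝ≥0∞)
    (A : Set (EuclideanSpace ℝ (Fin n) × ℝ)) : ℝ≥0∞ :=
  ⨅ (cov : ℕ → Set (EuclideanSpace ℝ (Fin n) × ℝ)) (_ : A ⊆ ⋃ k, cov k)
    (_ : ∀ k, pdiamS (cov k) ≤ δ), ∑' k, pdiamS (cov k) ^ η

/-- Parabolic Hausdorff measure of homogeneous dimension `η`. -/
noncomputable def pHaus {n : ℕ} (η : ℝ) (A : Set (EuclideanSpace ℝ (Fin n) × ℝ)) : ℝ≥0∞ :=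
  ⨆ (δ : ℝ≥0∞) (_ : 0 < δ), pHausPre η δ A

-- basic lemmas
lemma pdist_nonneg {n : ℕ} (p q : EuclideanSpace ℝ (Fin n) × ℝ) : 0 ≤ pdist p q :=
  add_nonneg dist_nonneg (Real.sqrt_nonneg _)

lemma le_pdiamS {n : ℕ} {A : Set (EuclideanSpace ℝ (Fin n) × ℝ)} {p q}
    (hp : p ∈ A) (hq : q ∈ A) : ENNReal.ofReal (pdist p q) ≤ pdiamS A := by
  unfold pdiamS
  exact le_iSup₂_of_le p hp (le_iSup₂_of_le q hq le_rfl)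

lemma pdiamS_le_iff {n : ℕ} {A : Set (EuclideanSpace ℝ (Fin n) × ℝ)} {c : ℝ≥0∞} :
    pdiamS A ≤ c ↔ ∀ p ∈ A, ∀ q ∈ A, ENNReal.ofReal (pdist p q) ≤ c := by
  unfold pdiamS
  simp [iSup_le_iff]

lemma pdiamS_empty {n : ℕ} : pdiamS (∅ : Set (EuclideanSpace ℝ (Fin n) × ℝ)) = 0 := by
  unfold pdiamS; simp

lemma pdist_le_of_pdiamS {n : ℕ} {A : Set (EuclideanSpace ℝ (Fin n) × ℝ)} {p q} {d : ℝ}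
    (hd : 0 ≤ d) (h : pdiamS A ≤ ENNReal.ofReal d) (hp : p ∈ A) (hq : q ∈ A) :
    pdist p q ≤ d := by
  have := (le_pdiamS hp hq).trans h
  rwa [ENNReal.ofReal_le_ofReal_iff hd] at this

lemma pHausPre_anti {n : ℕ} (η : ℝ) {δ₁ δ₂ : ℝ≥0∞} (h : δ₁ ≤ δ₂)
    (A : Set (EuclideanSpace ℝ (Fin n) × ℝ)) : pHausPre η δ₂ A ≤ pHausPre η δ₁ A := by
  unfold pHausPre
  exact le_iInf₂ fun cov hcov => le_iInf fun hd =>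
    iInf₂_le_of_le cov hcov (iInf_le_of_le (fun k => (hd k).trans h) le_rfl)

lemma pHausPre_mono {n : ℕ} (η : ℝ) (δ : ℝ≥0∞) {A B : Set (EuclideanSpace ℝ (Fin n) × ℝ)}
    (h : A ⊆ B) : pHausPre η δ A ≤ pHausPre η δ B := by
  unfold pHausPre
  exact le_iInf₂ fun cov hcov => le_iInf fun hd =>
    iInf₂_le_of_le cov (h.trans hcov) (iInf_le_of_le hd le_rfl)

lemma pHaus_mono {n : ℕ} (η : ℝ) {A B : Set (EuclideanSpace ℝ (Fin n) × ℝ)}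
    (h : A ⊆ B) : pHaus η A ≤ pHaus η B := by
  unfold pHaus
  exact iSup₂_mono fun δ _ => pHausPre_mono η δ h

lemma pHausPre_le_pHaus {n : ℕ} (η : ℝ) {δ : ℝ≥0∞} (hδ : 0 < δ)
    (A : Set (EuclideanSpace ℝ (Fin n) × ℝ)) : pHausPre η δ A ≤ pHaus η A :=
  le_iSup₂_of_le δ hδ le_rfl

lemma pdiamS_image_le {n m : ℕ} {f : EuclideanSpace ℝ (Fin n) × ℝ → EuclideanSpace ℝ (Fin m) × ℝ}
    {L : ℝ} (hL : 0 ≤ L) (hf : ∀ p q, pdist (f p) (f q) ≤ L * pdist p q)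
    (S : Set (EuclideanSpace ℝ (Fin n) × ℝ)) :
    pdiamS (f '' S) ≤ ENNReal.ofReal L * pdiamS S := by
  rw [pdiamS_le_iff]
  rintro _ ⟨p, hp, rfl⟩ _ ⟨q, hq, rfl⟩
  calc ENNReal.ofReal (pdist (f p) (f q)) ≤ ENNReal.ofReal (L * pdist p q) :=
        ENNReal.ofReal_le_ofReal (hf p q)
    _ = ENNReal.ofReal L * ENNReal.ofReal (pdist p q) := ENNReal.ofReal_mul hL
    _ ≤ ENNReal.ofReal L * pdiamS S := by
        exact mul_le_mul_right (le_pdiamS hp hq) _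

lemma pHausPre_image_le {n m : ℕ} {f : EuclideanSpace ℝ (Fin n) × ℝ → EuclideanSpace ℝ (Fin m) × ℝ}
    {L : ℝ} (hL : 0 < L) (hf : ∀ p q, pdist (f p) (f q) ≤ L * pdist p q)
    {η : ℝ} (hη : 0 < η) (δ : ℝ≥0∞) (A : Set (EuclideanSpace ℝ (Fin n) × ℝ)) :
    pHausPre η (ENNReal.ofReal L * δ) (f '' A) ≤ ENNReal.ofReal L ^ η * pHausPre η δ A := by
  have hL0 : (ENNReal.ofReal L) ≠ 0 := by simp [hL]
  have hLt : (ENNReal.ofReal L) ≠ ∞ := ENNReal.ofReal_ne_top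
  have hc0 : (ENNReal.ofReal L ^ η) ≠ 0 := by
    simp [ENNReal.rpow_eq_zero_iff, hL0, hLt]
  have hct : (ENNReal.ofReal L ^ η) ≠ ∞ := by
    simp [ENNReal.rpow_eq_top_iff, hL0, hLt]
  unfold pHausPre
  rw [ENNReal.mul_iInf_of_ne hc0 hct]
  refine le_iInf fun cov => ?_
  rw [ENNReal.mul_iInf_of_ne hc0 hct]
  refine le_iInf fun hcov => ?_
  rw [ENNReal.mul_iInf_of_ne hc0 hct]
  refine le_iInf fun hd => ?_
  refine iInf₂_le_of_le (fun j => f '' cov j) ?_ (iInf_le_of_le ?_ ?_)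
  · intro x hx
    obtain ⟨p, hp, rfl⟩ := hx
    obtain ⟨j, hj⟩ := Set.mem_iUnion.1 (hcov hp)
    exact Set.mem_iUnion.2 ⟨j, Set.mem_image_of_mem f hj⟩
  · intro j
    exact (pdiamS_image_le hL.le hf _).trans (mul_le_mul_right (hd j) _)
  · rw [← ENNReal.tsum_mul_left]
    refine ENNReal.tsum_le_tsum fun j => ?_
    rw [← ENNReal.mul_rpow_of_nonneg _ _ hη.le]
    exact ENNReal.rpow_le_rpow (pdiamS_image_le hL.le hf _) hη.le

lemma pHaus_image_le {n m : ℕ} {f : EuclideanSpace ℝ (Fin n) × ℝ → EuclideanSpace ℝ (Fin m) × ℝ}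
    {L : ℝ} (hL : 0 < L) (hf : ∀ p q, pdist (f p) (f q) ≤ L * pdist p q)
    {η : ℝ} (hη : 0 < η) (A : Set (EuclideanSpace ℝ (Fin n) × ℝ)) :
    pHaus η (f '' A) ≤ ENNReal.ofReal L ^ η * pHaus η A := by
  have hL0 : (ENNReal.ofReal L) ≠ 0 := by simp [hL]
  have hLt : (ENNReal.ofReal L) ≠ ∞ := ENNReal.ofReal_ne_top
  refine iSup₂_le fun δ hδ => ?_
  have hδ' : 0 < δ / ENNReal.ofReal L := ENNReal.div_pos hδ.ne' hLt
  calc pHausPre η δ (f '' A)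
      ≤ pHausPre η (ENNReal.ofReal L * (δ / ENNReal.ofReal L)) (f '' A) :=
        pHausPre_anti η ENNReal.mul_div_le _
    _ ≤ ENNReal.ofReal L ^ η * pHausPre η (δ / ENNReal.ofReal L) A :=
        pHausPre_image_le hL hf hη _ A
    _ ≤ ENNReal.ofReal L ^ η * pHaus η A :=
        mul_le_mul_right (pHausPre_le_pHaus η hδ' A) _

lemma exists_subinterval {m : ℕ} (hm : 0 < m) {s : ℝ} (hs : |s| < 1) :
    ∃ j : Fin m, s ∈ Set.Icc (-1 + 2*(j:ℝ)/m) (-1 + 2*((j:ℝ)+1)/m) := by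
  obtain ⟨hs1, hs2⟩ := abs_lt.1 hs
  have hm' : (0:ℝ) < m := by exact_mod_cast hm
  set u : ℝ := (s+1)/2 with hu
  have hu0 : 0 ≤ u := by simp only [hu]; linarith
  have hu1 : u < 1 := by simp only [hu]; linarith
  set j₀ := ⌊u * m⌋₊ with hj
  have h1 : (j₀:ℝ) ≤ u * m := Nat.floor_le (by positivity)
  have h2 : u * m < j₀ + 1 := Nat.lt_floor_add_one _
  have hjm : j₀ < m := by
    rw [hj, Nat.floor_lt (by positivity)]
    nlinarith
  refine ⟨⟨j₀, hjm⟩, ?_, ?_⟩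
  · have : 2*(j₀:ℝ)/m ≤ s + 1 := by rw [div_le_iff₀ hm']; nlinarith
    simpa using by linarith
  · have : s + 1 ≤ 2*((j₀:ℝ)+1)/m := by rw [le_div_iff₀ hm']; nlinarith
    simpa using by linarith

lemma abs_sub_le_width {lo hi x y : ℝ} (hx : x ∈ Set.Icc lo hi) (hy : y ∈ Set.Icc lo hi) :
    |x - y| ≤ hi - lo := by
  rw [abs_sub_le_iff]
  exact ⟨by linarith [hx.1, hx.2, hy.1, hy.2], by linarith [hx.1, hx.2, hy.1, hy.2]⟩

def ucell (k N : ℕ) (v : Fin k → Fin N) (w : Fin (N^2)) : Set (EuclideanSpace ℝ (Fin k) × ℝ) :=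
  {q | (∀ i, q.1 i ∈ Set.Icc (-1 + 2*((v i : ℕ):ℝ)/N) (-1 + 2*(((v i : ℕ):ℝ)+1)/N)) ∧
       q.2 ∈ Set.Icc (-1 + 2*((w : ℕ):ℝ)/(N^2:ℕ)) (-1 + 2*(((w : ℕ):ℝ)+1)/(N^2:ℕ))}

lemma ucell_pdiam {k N : ℕ} (hN : 0 < N) (v : Fin k → Fin N) (w : Fin (N^2)) :
    pdiamS (ucell k N v w) ≤ ENNReal.ofReal ((2*Real.sqrt k + 2)/N) := by
  have hN' : (0:ℝ) < N := by exact_mod_cast hN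
  rw [pdiamS_le_iff]
  intro p hp q hq
  apply ENNReal.ofReal_le_ofReal
  obtain ⟨hp1, hp2⟩ := hp
  obtain ⟨hq1, hq2⟩ := hq
  have hcoord : ∀ i, |p.1 i - q.1 i| ≤ 2/N := by
    intro i
    have h := abs_sub_le_width (hp1 i) (hq1 i)
    have : (-1 + 2*(((v i : ℕ):ℝ)+1)/N) - (-1 + 2*((v i : ℕ):ℝ)/N) = 2/N := by
      field_simp; ring
    linarith
  have hsp : dist p.1 q.1 ≤ Real.sqrt k * (2/N) := by
    rw [EuclideanSpace.dist_eq]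
    have hsum : ∑ i, dist (p.1 i) (q.1 i)^2 ≤ (k:ℝ) * (2/N)^2 := by
      calc ∑ i, dist (p.1 i) (q.1 i)^2 ≤ ∑ _i : Fin k, ((2:ℝ)/N)^2 :=
            Finset.sum_le_sum fun i _ => by
              rw [Real.dist_eq]
              exact pow_le_pow_left₀ (abs_nonneg _) (hcoord i) 2
        _ = (k:ℝ) * (2/N)^2 := by simp [Finset.card_univ]
    calc Real.sqrt (∑ i, dist (p.1 i) (q.1 i)^2) ≤ Real.sqrt ((k:ℝ) * (2/N)^2) :=
          Real.sqrt_le_sqrt hsum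
      _ = Real.sqrt k * (2/N) := by
          rw [Real.sqrt_mul (Nat.cast_nonneg k), Real.sqrt_sq (by positivity)]
  have htm : Real.sqrt |p.2 - q.2| ≤ 2/N := by
    have h := abs_sub_le_width hp2 hq2
    have hw : (-1 + 2*(((w : ℕ):ℝ)+1)/(N^2:ℕ)) - (-1 + 2*((w : ℕ):ℝ)/(N^2:ℕ)) = 2/(N^2:ℕ) := by
      have : ((N^2:ℕ):ℝ) = (N:ℝ)^2 := by push_cast; ring
      rw [this]
      field_simp; ring
    have h1 : |p.2 - q.2| ≤ (2/N)^2 := by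
      have : (2:ℝ)/(N^2:ℕ) ≤ (2/N)^2 := by
        have : ((N^2:ℕ):ℝ) = (N:ℝ)^2 := by push_cast; ring
        rw [this, div_pow]
        apply div_le_div_of_nonneg_right ?_ (by positivity)
        · norm_num
      linarith
    calc Real.sqrt |p.2 - q.2| ≤ Real.sqrt ((2/N)^2) := Real.sqrt_le_sqrt h1
      _ = 2/N := Real.sqrt_sq (by positivity)
  have : pdist p q ≤ Real.sqrt k * (2/N) + 2/N := add_le_add hsp htm
  calc pdist p q ≤ Real.sqrt k * (2/N) + 2/N := this
    _ = (2*Real.sqrt k + 2)/N := by ring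

lemma pcube_subset_ucells {k N : ℕ} (hN : 0 < N) :
    ∀ q ∈ pcube (0 : EuclideanSpace ℝ (Fin k) × ℝ) 1,
      ∃ (v : Fin k → Fin N) (w : Fin (N^2)), q ∈ ucell k N v w := by
  rintro q ⟨hq1, hq2⟩
  choose v hv using fun i => exists_subinterval hN (show |q.1 i| < 1 by simpa using hq1 i)
  have hN2 : 0 < N^2 := by positivity
  obtain ⟨w, hw⟩ := exists_subinterval hN2 (s := q.2) (by simpa using hq2)
  exact ⟨v, w, fun i => hv i, hw⟩

lemma pHausPre_unitcube_le {k : ℕ} {δ : ℝ≥0∞} (hδ : 0 < δ) :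
    pHausPre ((k:ℝ)+2) δ (pcube (0 : EuclideanSpace ℝ (Fin k) × ℝ) 1) ≤
      ENNReal.ofReal (2*Real.sqrt k + 2) ^ ((k:ℝ)+2) := by
  set c : ℝ := 2*Real.sqrt k + 2 with hcdef
  have hc : 0 < c := by positivity
  have hη : (0:ℝ) < (k:ℝ)+2 := by positivity
  have hrpow : ∀ x : ℝ≥0∞, x ^ ((k:ℝ)+2) = x ^ (k+2 : ℕ) := by
    intro x
    rw [← ENNReal.rpow_natCast]
    norm_num
  obtain ⟨N, hNpos, hNδ⟩ : ∃ N : ℕ, 0 < N ∧ ENNReal.ofReal (c/N) ≤ δ := by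
    rcases eq_or_ne δ ⊤ with h|h
    · exact ⟨1, one_pos, by simp [h]⟩
    · have hδ0 : 0 < δ.toReal := ENNReal.toReal_pos hδ.ne' h
      obtain ⟨N, hN⟩ := exists_nat_gt (c/δ.toReal)
      have hNpos : 0 < N := by
        rcases Nat.eq_zero_or_pos N with h0|h0
        · exfalso; rw [h0] at hN; push_cast at hN
          nlinarith [div_pos hc hδ0]
        · exact h0
      refine ⟨N, hNpos, ?_⟩
      rw [← ENNReal.ofReal_toReal h]
      apply ENNReal.ofReal_le_ofReal
      rw [div_le_iff₀ (by exact_mod_cast hNpos)]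
      rw [div_lt_iff₀ hδ0] at hN
      nlinarith
  classical
  have hcard : Fintype.card ((Fin k → Fin N) × Fin (N^2)) = N^(k+2) := by
    simp [Fintype.card_fun, pow_add]
  let e : ((Fin k → Fin N) × Fin (N^2)) ≃ Fin (N^(k+2)) := Fintype.equivFinOfCardEq hcard
  set cov : ℕ → Set (EuclideanSpace ℝ (Fin k) × ℝ) :=
    fun j => if h : j < N^(k+2) then ucell k N (e.symm ⟨j, h⟩).1 (e.symm ⟨j, h⟩).2 else ∅
    with hcov
  have hdiam : ∀ j, pdiamS (cov j) ≤ ENNReal.ofReal (c/N) := by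
    intro j
    rcases lt_or_ge j (N^(k+2)) with h|h
    · simp only [hcov, dif_pos h]
      exact ucell_pdiam hNpos _ _
    · simp only [hcov, dif_neg (not_lt.2 h), pdiamS_empty]
      exact zero_le
  have hcover : pcube (0 : EuclideanSpace ℝ (Fin k) × ℝ) 1 ⊆ ⋃ j, cov j := by
    intro q hq
    obtain ⟨v, w, hvw⟩ := pcube_subset_ucells hNpos q hq
    refine Set.mem_iUnion.2 ⟨(e (v, w) : ℕ), ?_⟩
    simp only [hcov, Fin.is_lt, dif_pos, Fin.eta, Equiv.symm_apply_apply]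
    exact hvw
  refine le_trans (iInf₂_le_of_le cov hcover (iInf_le_of_le (fun j => (hdiam j).trans hNδ) le_rfl)) ?_
  have hvanish : ∀ j ∉ Finset.range (N^(k+2)), pdiamS (cov j) ^ ((k:ℝ)+2) = 0 := by
    intro j hj
    rw [Finset.mem_range, not_lt] at hj
    simp only [hcov, dif_neg (not_lt.2 hj), pdiamS_empty]
    exact ENNReal.zero_rpow_of_pos hη
  rw [tsum_eq_sum hvanish]
  calc ∑ j ∈ Finset.range (N^(k+2)), pdiamS (cov j) ^ ((k:ℝ)+2)
      ≤ ∑ _j ∈ Finset.range (N^(k+2)), ENNReal.ofReal (c/N) ^ ((k:ℝ)+2) :=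
        Finset.sum_le_sum fun j _ => ENNReal.rpow_le_rpow (hdiam j) hη.le
    _ = ((N^(k+2) : ℕ) : ℝ≥0∞) * ENNReal.ofReal (c/N) ^ ((k:ℝ)+2) := by
        rw [Finset.sum_const, Finset.card_range, nsmul_eq_mul]
    _ = ENNReal.ofReal c ^ ((k:ℝ)+2) := by
        simp only [hrpow]
        have h1 : ((N^(k+2) : ℕ) : ℝ≥0∞) = (ENNReal.ofReal N) ^ (k+2) := by
          rw [ENNReal.ofReal_natCast]
          push_cast
          rfl
        rw [h1, ← mul_pow, ← ENNReal.ofReal_mul (by positivity)]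
        congr 2
        field_simp

lemma pHaus_unitcube_le (k : ℕ) :
    pHaus ((k:ℝ)+2) (pcube (0 : EuclideanSpace ℝ (Fin k) × ℝ) 1) ≤
      ENNReal.ofReal (2*Real.sqrt k + 2) ^ ((k:ℝ)+2) :=
  iSup₂_le fun _ hδ => pHausPre_unitcube_le hδ

lemma volume_box_le {k : ℕ} (a : EuclideanSpace ℝ (Fin k)) {d : ℝ} :
    volume {x : EuclideanSpace ℝ (Fin k) | ∀ i, |x i - a i| ≤ d} ≤
      ENNReal.ofReal (2*d) ^ k := by
  have hbox : {x : EuclideanSpace ℝ (Fin k) | ∀ i, |x i - a i| ≤ d} =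
      (MeasurableEquiv.toLp 2 (Fin k → ℝ)).symm ⁻¹'
        (Set.univ.pi fun i => Set.Icc (a i - d) (a i + d)) := by
    ext x
    simp only [Set.mem_setOf_eq, Set.mem_preimage, Set.mem_pi, Set.mem_univ, forall_true_left,
      Set.mem_Icc, MeasurableEquiv.toLp_symm_apply, true_implies]
    refine forall_congr' fun i => ?_
    rw [abs_sub_le_iff]
    constructor
    · rintro ⟨h1, h2⟩; exact ⟨by linarith, by linarith⟩
    · rintro ⟨h1, h2⟩; exact ⟨by linarith, by linarith⟩
  rw [hbox,
    (EuclideanSpace.volume_preserving_symm_measurableEquiv_toLp (Fin k)).measure_preimage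
      (MeasurableSet.univ_pi fun i => measurableSet_Icc).nullMeasurableSet,
    volume_pi_pi]
  refine le_of_eq ?_
  calc ∏ i : Fin k, volume (Set.Icc (a i - d) (a i + d))
      = ∏ _i : Fin k, ENNReal.ofReal (2*d) := by
        refine Finset.prod_congr rfl fun i _ => ?_
        rw [Real.volume_Icc]
        congr 1
        ring
    _ = ENNReal.ofReal (2*d) ^ k := by simp

lemma abs_coord_le_dist {k : ℕ} (x y : EuclideanSpace ℝ (Fin k)) (i : Fin k) :
    |x i - y i| ≤ dist x y := by
  rw [EuclideanSpace.dist_eq]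
  have h : |x i - y i| = Real.sqrt (dist (x i) (y i)^2) := by
    rw [Real.sqrt_sq_eq_abs, Real.dist_eq, abs_abs]
  rw [h]
  apply Real.sqrt_le_sqrt
  exact Finset.single_le_sum (f := fun i => dist (x i) (y i)^2)
    (fun i _ => sq_nonneg _) (Finset.mem_univ i)

lemma volume_unit_pcube {k : ℕ} :
    ENNReal.ofReal 2 ^ (k+1) ≤ volume (pcube (0 : EuclideanSpace ℝ (Fin k) × ℝ) 1) := by
  have hset : pcube (0 : EuclideanSpace ℝ (Fin k) × ℝ) 1 =
      ((MeasurableEquiv.toLp 2 (Fin k → ℝ)).symm ⁻¹'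
        (Set.univ.pi fun _ => Set.Ioo (-1 : ℝ) 1)) ×ˢ Set.Ioo (-1 : ℝ) 1 := by
    ext q
    simp only [pcube, Set.mem_setOf_eq, Set.mem_prod, Set.mem_preimage, Set.mem_pi, Set.mem_univ,
      true_implies, Set.mem_Ioo, MeasurableEquiv.toLp_symm_apply]
    constructor
    · rintro ⟨h1, h2⟩
      refine ⟨fun i => ?_, ?_⟩
      · have := h1 i; simp only [Prod.fst_zero] at this
        have : |q.1 i| < 1 := by simpa using this
        exact abs_lt.1 this
      · simp only [Prod.snd_zero, sub_zero, one_pow] at h2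
        exact abs_lt.1 (by simpa using h2)
    · rintro ⟨h1, h2⟩
      refine ⟨fun i => ?_, ?_⟩
      · have := h1 i
        simpa [abs_lt] using this
      · simpa [abs_lt] using h2
  rw [hset, Measure.volume_eq_prod, Measure.prod_prod,
    (EuclideanSpace.volume_preserving_symm_measurableEquiv_toLp (Fin k)).measure_preimage
      (MeasurableSet.univ_pi fun _ => measurableSet_Ioo).nullMeasurableSet,
    volume_pi_pi]
  refine le_of_eq ?_
  rw [Real.volume_Ioo]
  norm_num
  rw [pow_succ]

lemma pHausPre_unitcube_ge {k : ℕ} :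
    1 ≤ pHausPre ((k:ℝ)+2) 1 (pcube (0 : EuclideanSpace ℝ (Fin k) × ℝ) 1) := by
  have hη : (0:ℝ) < (k:ℝ)+2 := by positivity
  have hrpow : ∀ x : ℝ≥0∞, x ^ ((k:ℝ)+2) = x ^ (k+2 : ℕ) := by
    intro x; rw [← ENNReal.rpow_natCast]; norm_num
  refine le_iInf fun cov => le_iInf fun hcov => le_iInf fun hd => ?_
  set c : ℝ≥0∞ := ENNReal.ofReal 2 ^ (k+1) with hc
  have hc0 : c ≠ 0 := by simp [hc]
  have hct : c ≠ ∞ := by simp [hc]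
  have key : ∀ j, volume (cov j) ≤ c * pdiamS (cov j) ^ ((k:ℝ)+2) := by
    intro j
    rcases Set.eq_empty_or_nonempty (cov j) with he|⟨p₀, hp₀⟩
    · simp [he]
    have hfin : pdiamS (cov j) ≠ ∞ := ((hd j).trans_lt ENNReal.one_lt_top).ne
    set d : ℝ := (pdiamS (cov j)).toReal with hdd
    have hd0 : 0 ≤ d := ENNReal.toReal_nonneg
    have hdiam_eq : pdiamS (cov j) = ENNReal.ofReal d := (ENNReal.ofReal_toReal hfin).symm
    have hsub : cov j ⊆
        {x : EuclideanSpace ℝ (Fin k) | ∀ i, |x i - p₀.1 i| ≤ d} ×ˢ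
          Set.Icc (p₀.2 - d^2) (p₀.2 + d^2) := by
      intro q hq
      have hpd : pdist q p₀ ≤ d :=
        pdist_le_of_pdiamS hd0 (le_of_eq hdiam_eq) hq hp₀
      have h1 : dist q.1 p₀.1 ≤ d :=
        le_trans (le_add_of_nonneg_right (Real.sqrt_nonneg _)) hpd
      have h2 : Real.sqrt |q.2 - p₀.2| ≤ d :=
        le_trans (le_add_of_nonneg_left dist_nonneg) hpd
      have h2' : |q.2 - p₀.2| ≤ d^2 := by
        have := pow_le_pow_left₀ (Real.sqrt_nonneg _) h2 2
        rwa [Real.sq_sqrt (abs_nonneg _)] at this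
      constructor
      · exact fun i => (abs_coord_le_dist q.1 p₀.1 i).trans h1
      · rw [Set.mem_Icc]
        rw [abs_le] at h2'
        exact ⟨by linarith [h2'.1], by linarith [h2'.2]⟩
    calc volume (cov j) ≤ volume ({x : EuclideanSpace ℝ (Fin k) | ∀ i, |x i - p₀.1 i| ≤ d} ×ˢ
            Set.Icc (p₀.2 - d^2) (p₀.2 + d^2)) := measure_mono hsub
      _ ≤ ENNReal.ofReal (2*d) ^ k * ENNReal.ofReal (2*d^2) := by
          rw [Measure.volume_eq_prod, Measure.prod_prod, Real.volume_Icc]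
          have : p₀.2 + d^2 - (p₀.2 - d^2) = 2*d^2 := by ring
          rw [this]
          exact mul_le_mul_left (volume_box_le p₀.1) _
      _ = c * pdiamS (cov j) ^ ((k:ℝ)+2) := by
          rw [hdiam_eq, hrpow, hc]
          rw [ENNReal.ofReal_mul (by norm_num), ENNReal.ofReal_mul (by norm_num),
            ENNReal.ofReal_pow hd0, mul_pow]
          ring
  have chain : c * 1 ≤ c * ∑' j, pdiamS (cov j) ^ ((k:ℝ)+2) := by
    rw [mul_one]
    calc c ≤ volume (pcube (0 : EuclideanSpace ℝ (Fin k) × ℝ) 1) := volume_unit_pcube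
      _ ≤ volume (⋃ j, cov j) := measure_mono hcov
      _ ≤ ∑' j, volume (cov j) := measure_iUnion_le cov
      _ ≤ ∑' j, c * pdiamS (cov j) ^ ((k:ℝ)+2) := ENNReal.tsum_le_tsum key
      _ = c * ∑' j, pdiamS (cov j) ^ ((k:ℝ)+2) := ENNReal.tsum_mul_left
  exact (ENNReal.mul_le_mul_iff_right hc0 hct).1 chain

noncomputable def simT {k : ℕ} (c : EuclideanSpace ℝ (Fin k) × ℝ) (r : ℝ) :
    EuclideanSpace ℝ (Fin k) × ℝ → EuclideanSpace ℝ (Fin k) × ℝ :=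
  fun q => (c.1 + r • q.1, c.2 + r^2 * q.2)

noncomputable def simS {k : ℕ} (c : EuclideanSpace ℝ (Fin k) × ℝ) (r : ℝ) :
    EuclideanSpace ℝ (Fin k) × ℝ → EuclideanSpace ℝ (Fin k) × ℝ :=
  fun q => (r⁻¹ • (q.1 - c.1), (q.2 - c.2)/r^2)

lemma pdist_simT {k : ℕ} (c : EuclideanSpace ℝ (Fin k) × ℝ) {r : ℝ} (hr : 0 < r)
    (p q : EuclideanSpace ℝ (Fin k) × ℝ) :
    pdist (simT c r p) (simT c r q) = r * pdist p q := by
  unfold pdist simT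
  simp only [dist_add_left]
  rw [dist_smul₀, Real.norm_eq_abs, abs_of_pos hr]
  have ht : |c.2 + r^2*p.2 - (c.2 + r^2*q.2)| = r^2 * |p.2 - q.2| := by
    have h' : c.2 + r^2*p.2 - (c.2 + r^2*q.2) = r^2 * (p.2 - q.2) := by ring
    rw [h', abs_mul, abs_of_pos (show (0:ℝ) < r^2 by positivity)]
  rw [ht, Real.sqrt_mul (by positivity), Real.sqrt_sq hr.le]
  ring

lemma pdist_simS {k : ℕ} (c : EuclideanSpace ℝ (Fin k) × ℝ) {r : ℝ} (hr : 0 < r)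
    (p q : EuclideanSpace ℝ (Fin k) × ℝ) :
    pdist (simS c r p) (simS c r q) = r⁻¹ * pdist p q := by
  unfold pdist simS
  rw [dist_smul₀, Real.norm_eq_abs, abs_of_pos (inv_pos.2 hr), dist_sub_right]
  have ht : |(p.2 - c.2)/r^2 - (q.2 - c.2)/r^2| = (r^2)⁻¹ * |p.2 - q.2| := by
    have h' : (p.2 - c.2)/r^2 - (q.2 - c.2)/r^2 = (r^2)⁻¹ * (p.2 - q.2) := by
      field_simp
      ring
    rw [h', abs_mul, abs_of_pos (show (0:ℝ) < (r^2)⁻¹ by positivity)]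
  rw [ht, Real.sqrt_mul (by positivity), Real.sqrt_inv, Real.sqrt_sq hr.le]
  ring

lemma pcube_subset_simT {k : ℕ} (c : EuclideanSpace ℝ (Fin k) × ℝ) {r : ℝ} (hr : 0 < r) :
    pcube c r ⊆ simT c r '' pcube (0 : EuclideanSpace ℝ (Fin k) × ℝ) 1 := by
  intro q hq
  obtain ⟨hq1, hq2⟩ := hq
  refine ⟨simS c r q, ⟨?_, ?_⟩, ?_⟩
  · intro i
    simp only [simS, PiLp.smul_apply, PiLp.sub_apply, smul_eq_mul, Prod.fst_zero,
      PiLp.zero_apply, sub_zero, abs_mul, abs_of_pos (inv_pos.2 hr)]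
    rw [inv_mul_lt_iff₀ hr, mul_one]
    exact hq1 i
  · simp only [simS, Prod.snd_zero, sub_zero, one_pow, abs_div,
      abs_of_pos (show (0:ℝ) < r^2 by positivity)]
    rw [div_lt_one (by positivity)]
    exact hq2
  · unfold simT simS
    ext i
    · simp only [PiLp.add_apply, PiLp.smul_apply, PiLp.sub_apply, smul_eq_mul]
      field_simp
      ring
    · simp only
      field_simp
      ring

lemma unit_subset_simS {k : ℕ} (c : EuclideanSpace ℝ (Fin k) × ℝ) {r : ℝ} (hr : 0 < r) :
    pcube (0 : EuclideanSpace ℝ (Fin k) × ℝ) 1 ⊆ simS c r '' pcube c r := by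
  intro p hp
  obtain ⟨h1, h2⟩ := hp
  refine ⟨simT c r p, ⟨?_, ?_⟩, ?_⟩
  · intro i
    simp only [simT, PiLp.add_apply, PiLp.smul_apply, smul_eq_mul, add_sub_cancel_left]
    rw [abs_mul, abs_of_pos hr]
    have h := h1 i
    simp only [Prod.fst_zero, PiLp.zero_apply, sub_zero] at h
    calc r * |p.1 i| < r * 1 := by exact mul_lt_mul_of_pos_left h hr
      _ = r := mul_one r
  · simp only [simT, add_sub_cancel_left, abs_mul, abs_of_pos (show (0:ℝ) < r^2 by positivity),
      sq_abs]
    have h := h2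
    simp only [Prod.snd_zero, sub_zero, one_pow] at h
    calc r^2 * |p.2| < r^2 * 1 := by exact mul_lt_mul_of_pos_left h (by positivity)
      _ = r^2 := mul_one _
  · unfold simT simS
    ext i
    · simp only [PiLp.smul_apply, PiLp.add_apply, PiLp.sub_apply, smul_eq_mul]
      field_simp
      ring
    · simp only
      field_simp
      ring

lemma pHaus_pcube_upper {k : ℕ} (c : EuclideanSpace ℝ (Fin k) × ℝ) {r : ℝ} (hr : 0 < r) :
    pHaus ((k:ℝ)+2) (pcube c r) ≤
      ENNReal.ofReal r ^ ((k:ℝ)+2) * ENNReal.ofReal (2*Real.sqrt k + 2) ^ ((k:ℝ)+2) := by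
  have hη : (0:ℝ) < (k:ℝ)+2 := by positivity
  calc pHaus ((k:ℝ)+2) (pcube c r)
      ≤ pHaus ((k:ℝ)+2) (simT c r '' pcube (0 : EuclideanSpace ℝ (Fin k) × ℝ) 1) :=
        pHaus_mono _ (pcube_subset_simT c hr)
    _ ≤ ENNReal.ofReal r ^ ((k:ℝ)+2) * pHaus ((k:ℝ)+2) (pcube (0 : EuclideanSpace ℝ (Fin k) × ℝ) 1) :=
        pHaus_image_le hr (fun p q => le_of_eq (pdist_simT c hr p q)) hη _
    _ ≤ _ := mul_le_mul_right (pHaus_unitcube_le k) _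

lemma pHaus_pcube_lower {k : ℕ} (c : EuclideanSpace ℝ (Fin k) × ℝ) {r : ℝ} (hr : 0 < r) :
    ENNReal.ofReal r ^ ((k:ℝ)+2) ≤ pHaus ((k:ℝ)+2) (pcube c r) := by
  have hη : (0:ℝ) < (k:ℝ)+2 := by positivity
  have h1 : (1:ℝ≥0∞) ≤ pHaus ((k:ℝ)+2) (pcube (0 : EuclideanSpace ℝ (Fin k) × ℝ) 1) :=
    le_trans pHausPre_unitcube_ge (pHausPre_le_pHaus _ one_pos _)
  have h2 : pHaus ((k:ℝ)+2) (pcube (0 : EuclideanSpace ℝ (Fin k) × ℝ) 1) ≤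
      ENNReal.ofReal r⁻¹ ^ ((k:ℝ)+2) * pHaus ((k:ℝ)+2) (pcube c r) :=
    (pHaus_mono _ (unit_subset_simS c hr)).trans
      (pHaus_image_le (inv_pos.2 hr) (fun p q => le_of_eq (pdist_simS c hr p q)) hη _)
  have h3 := h1.trans h2
  calc ENNReal.ofReal r ^ ((k:ℝ)+2) = ENNReal.ofReal r ^ ((k:ℝ)+2) * 1 := (mul_one _).symm
    _ ≤ ENNReal.ofReal r ^ ((k:ℝ)+2) *
        (ENNReal.ofReal r⁻¹ ^ ((k:ℝ)+2) * pHaus ((k:ℝ)+2) (pcube c r)) := mul_le_mul_right h3 _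
    _ = (ENNReal.ofReal r * ENNReal.ofReal r⁻¹) ^ ((k:ℝ)+2) * pHaus ((k:ℝ)+2) (pcube c r) := by
        rw [← mul_assoc, ← ENNReal.mul_rpow_of_nonneg _ _ hη.le]
    _ = pHaus ((k:ℝ)+2) (pcube c r) := by
        rw [← ENNReal.ofReal_mul hr.le, mul_inv_cancel₀ hr.ne', ENNReal.ofReal_one,
          ENNReal.one_rpow, one_mul]

lemma dist_le_of_coords {k : ℕ} {x y : EuclideanSpace ℝ (Fin k)} {d : ℝ} (hd : 0 ≤ d)
    (h : ∀ i, |x i - y i| ≤ d) : dist x y ≤ Real.sqrt k * d := by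
  rw [EuclideanSpace.dist_eq]
  have hsum : ∑ i, dist (x i) (y i)^2 ≤ (k:ℝ) * d^2 := by
    calc ∑ i, dist (x i) (y i)^2 ≤ ∑ _i : Fin k, d^2 :=
          Finset.sum_le_sum fun i _ => by
            rw [Real.dist_eq]; exact pow_le_pow_left₀ (abs_nonneg _) (h i) 2
      _ = (k:ℝ) * d^2 := by simp [Finset.card_univ]
  calc Real.sqrt (∑ i, dist (x i) (y i)^2) ≤ Real.sqrt ((k:ℝ) * d^2) := Real.sqrt_le_sqrt hsum
    _ = Real.sqrt k * d := by rw [Real.sqrt_mul (Nat.cast_nonneg k), Real.sqrt_sq hd]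

noncomputable def graphMap {k : ℕ} (ψ : EuclideanSpace ℝ (Fin k) × ℝ → ℝ) :
    EuclideanSpace ℝ (Fin k) × ℝ → EuclideanSpace ℝ (Fin (k+1)) × ℝ :=
  fun q => ((WithLp.toLp 2 (Fin.snoc q.1.ofLp (ψ q) : Fin (k + 1) → ℝ) : EuclideanSpace ℝ (Fin (k + 1))), q.2)

def projMap {k : ℕ} : EuclideanSpace ℝ (Fin (k+1)) × ℝ → EuclideanSpace ℝ (Fin k) × ℝ :=
  fun q => ((WithLp.toLp 2 (fun i : Fin k => q.1 i.castSucc) : EuclideanSpace ℝ (Fin k)), q.2)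

lemma dist_snoc_le {k : ℕ} (x y : EuclideanSpace ℝ (Fin k)) (a c : ℝ) :
    @dist (EuclideanSpace ℝ (Fin (k+1))) _ (WithLp.toLp 2 (Fin.snoc x.ofLp a : Fin (k + 1) → ℝ))
      (WithLp.toLp 2 (Fin.snoc y.ofLp c : Fin (k + 1) → ℝ)) ≤ dist x y + |a - c| := by
  rw [EuclideanSpace.dist_eq (WithLp.toLp 2 (Fin.snoc x.ofLp a : Fin (k + 1) → ℝ))
    (WithLp.toLp 2 (Fin.snoc y.ofLp c : Fin (k + 1) → ℝ))]
  have hsum : ∑ i : Fin (k+1),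
      dist ((WithLp.toLp 2 (Fin.snoc x.ofLp a : Fin (k + 1) → ℝ) : EuclideanSpace ℝ (Fin (k+1))) i)
        ((WithLp.toLp 2 (Fin.snoc y.ofLp c : Fin (k + 1) → ℝ) : EuclideanSpace ℝ (Fin (k+1))) i) ^ 2
      = (dist x y)^2 + (dist a c)^2 := by
    rw [Fin.sum_univ_castSucc]
    simp only [PiLp.toLp_apply, Fin.snoc_castSucc, Fin.snoc_last]
    congr 1
    rw [EuclideanSpace.dist_eq, Real.sq_sqrt (Finset.sum_nonneg fun i _ => sq_nonneg _)]
  rw [hsum]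
  have h1 : (dist x y)^2 + (dist a c)^2 ≤ (dist x y + dist a c)^2 := by
    nlinarith [dist_nonneg (x := x) (y := y), dist_nonneg (x := a) (y := c)]
  calc Real.sqrt ((dist x y)^2 + (dist a c)^2) ≤ Real.sqrt ((dist x y + dist a c)^2) :=
        Real.sqrt_le_sqrt h1
    _ = dist x y + dist a c := Real.sqrt_sq (by positivity)
    _ = dist x y + |a - c| := by rw [Real.dist_eq]

lemma graphMap_lipschitz {k : ℕ} {ψ : EuclideanSpace ℝ (Fin k) × ℝ → ℝ} {b : ℝ} (hb : 0 ≤ b)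
    (hψ : ∀ p q : EuclideanSpace ℝ (Fin k) × ℝ,
      |ψ p - ψ q| ≤ b * (dist p.1 q.1 + Real.sqrt |p.2 - q.2|))
    (p q : EuclideanSpace ℝ (Fin k) × ℝ) :
    pdist (graphMap ψ p) (graphMap ψ q) ≤ (1+b) * pdist p q := by
  unfold pdist graphMap
  simp only
  have h1 := dist_snoc_le p.1 q.1 (ψ p) (ψ q)
  have h2 := hψ p q
  have h3 : (0:ℝ) ≤ Real.sqrt |p.2 - q.2| := Real.sqrt_nonneg _
  have h4 : (0:ℝ) ≤ dist p.1 q.1 := dist_nonneg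
  refine le_trans (add_le_add h1 le_rfl) ?_
  nlinarith

lemma projMap_lipschitz {k : ℕ} (p q : EuclideanSpace ℝ (Fin (k+1)) × ℝ) :
    pdist (projMap p) (projMap q) ≤ 1 * pdist (p := p) q := by
  unfold pdist
  rw [one_mul]
  have hd : dist (projMap (k := k) p).1 (projMap (k := k) q).1 ≤ dist p.1 q.1 := by
    rw [EuclideanSpace.dist_eq (projMap (k := k) p).1 (projMap (k := k) q).1,
      EuclideanSpace.dist_eq p.1 q.1]
    apply Real.sqrt_le_sqrt
    rw [Fin.sum_univ_castSucc (f := fun i => dist (p.1 i) (q.1 i) ^ 2)]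
    exact le_add_of_nonneg_right (sq_nonneg _)
  have ht1 : (projMap (k := k) p).2 = p.2 := rfl
  have ht2 : (projMap (k := k) q).2 = q.2 := rfl
  rw [ht1, ht2]
  exact add_le_add hd le_rfl

lemma graph_inter_subset {k : ℕ} (ψ : EuclideanSpace ℝ (Fin k) × ℝ → ℝ)
    (x₀ : EuclideanSpace ℝ (Fin k)) (t₀ : ℝ) (r : ℝ) :
    {p : EuclideanSpace ℝ (Fin (k + 1)) × ℝ |
        ∃ (x : EuclideanSpace ℝ (Fin k)) (t : ℝ),
          p = ((WithLp.toLp 2 (Fin.snoc x.ofLp (ψ (x, t)) : Fin (k + 1) → ℝ) : EuclideanSpace ℝ (Fin (k + 1))), t)} ∩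
      pcube (graphMap ψ (x₀, t₀)) r ⊆
        graphMap ψ '' pcube ((x₀, t₀) : EuclideanSpace ℝ (Fin k) × ℝ) r := by
  rintro q ⟨⟨x, t, rfl⟩, hq1, hq2⟩
  refine ⟨(x, t), ⟨fun i => ?_, ?_⟩, rfl⟩
  · have h := hq1 i.castSucc
    simpa [graphMap, Fin.snoc_castSucc] using h
  · simpa [graphMap] using hq2

lemma pcube_subset_proj_graph {k : ℕ} {ψ : EuclideanSpace ℝ (Fin k) × ℝ → ℝ} {b : ℝ}
    (hb : 0 ≤ b)
    (hψ : ∀ p q : EuclideanSpace ℝ (Fin k) × ℝ,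
      |ψ p - ψ q| ≤ b * (dist p.1 q.1 + Real.sqrt |p.2 - q.2|))
    (x₀ : EuclideanSpace ℝ (Fin k)) (t₀ : ℝ) {r : ℝ} (hr : 0 < r) :
    pcube ((x₀, t₀) : EuclideanSpace ℝ (Fin k) × ℝ) (r / (1 + b*(Real.sqrt k + 1))) ⊆
      projMap '' ({p : EuclideanSpace ℝ (Fin (k + 1)) × ℝ |
          ∃ (x : EuclideanSpace ℝ (Fin k)) (t : ℝ),
            p = ((WithLp.toLp 2 (Fin.snoc x.ofLp (ψ (x, t)) : Fin (k + 1) → ℝ) : EuclideanSpace ℝ (Fin (k + 1))), t)} ∩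
        pcube (graphMap ψ (x₀, t₀)) r) := by
  set D : ℝ := 1 + b*(Real.sqrt k + 1) with hD
  have hD1 : 1 ≤ D := by
    have : 0 ≤ b*(Real.sqrt k + 1) := by positivity
    linarith
  have hD0 : 0 < D := lt_of_lt_of_le one_pos hD1
  set ρ : ℝ := r / D with hρdef
  have hρ : 0 < ρ := div_pos hr hD0
  have hρr : ρ ≤ r := by
    rw [hρdef]
    exact div_le_self hr.le hD1
  rintro q ⟨h1, h2⟩
  simp only [Prod.fst, Prod.snd] at h1 h2
  refine ⟨graphMap ψ q, ⟨⟨q.1, q.2, by simp [graphMap]⟩, fun i => ?_, ?_⟩, ?_⟩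
  · refine Fin.lastCases ?_ (fun j => ?_) i
    · -- last coordinate: the ψ values
      have hdx : dist q.1 x₀ ≤ Real.sqrt k * ρ :=
        dist_le_of_coords (by positivity) (fun i => (h1 i).le)
      have hdt : Real.sqrt |q.2 - t₀| ≤ ρ := by
        calc Real.sqrt |q.2 - t₀| ≤ Real.sqrt (ρ^2) := Real.sqrt_le_sqrt h2.le
          _ = ρ := Real.sqrt_sq hρ.le
      have hlip := hψ q (x₀, t₀)
      have habs : |ψ q - ψ (x₀, t₀)| ≤ b * (Real.sqrt k * ρ + ρ) := by
        refine hlip.trans ?_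
        have : dist q.1 (x₀, t₀).1 + Real.sqrt |q.2 - (x₀, t₀).2| ≤ Real.sqrt k * ρ + ρ :=
          add_le_add hdx hdt
        exact mul_le_mul_of_nonneg_left this hb
      have hval : b * (Real.sqrt k * ρ + ρ) = (D - 1) * ρ := by rw [hD]; ring
      have hlt : |ψ q - ψ (x₀, t₀)| < r := by
        rw [hval] at habs
        have : (D - 1) * ρ = r - ρ := by
          rw [hρdef]
          field_simp
        linarith [habs, hρ, this]
      simpa [graphMap, Fin.snoc_last] using hlt
    · have h := h1 j
      have : |q.1 j - x₀ j| < r := lt_of_lt_of_le h hρr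
      simpa [graphMap, Fin.snoc_castSucc] using this
  · have : |q.2 - t₀| < r^2 := by
      refine lt_of_lt_of_le h2 ?_
      exact pow_le_pow_left₀ hρ.le hρr 2
    simpa [graphMap] using this
  · have hfst : (projMap (graphMap ψ q)).1 = q.1 := by
      ext i
      simp [projMap, graphMap, Fin.snoc_castSucc]
    have hsnd : (projMap (graphMap ψ q)).2 = q.2 := rfl
    exact Prod.ext hfst hsnd


/-- the graph of a Lip(1,1/2) function `ψ : ℝᵏ × ℝ → ℝ` with constant `b`
(a subset of `ℝ^{k+1} × ℝ`, i.e. of `ℝ^{n+1}` with `n = k+1` spatial dimensions) is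
parabolic Ahlfors–David regular for the parabolic Hausdorff measure `H_p^{k+2}`,
with a constant `M = M(k,b)`. -/
theorem graph_of_parabolic_lipschitz_is_ADR (k : ℕ) (b : ℝ) (hb : 0 ≤ b) :
    ∃ M : ℝ, 1 ≤ M ∧
      ∀ ψ : EuclideanSpace ℝ (Fin k) × ℝ → ℝ,
        (∀ p q : EuclideanSpace ℝ (Fin k) × ℝ,
          |ψ p - ψ q| ≤ b * (dist p.1 q.1 + Real.sqrt |p.2 - q.2|)) →
        ∀ p ∈ {p : EuclideanSpace ℝ (Fin (k + 1)) × ℝ |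
            ∃ (x : EuclideanSpace ℝ (Fin k)) (t : ℝ),
              p = ((WithLp.toLp 2 (Fin.snoc x.ofLp (ψ (x, t)) : Fin (k + 1) → ℝ) : EuclideanSpace ℝ (Fin (k + 1))), t)},
          ∀ r : ℝ, 0 < r →
            ENNReal.ofReal (M⁻¹ * r ^ (k + 2)) ≤
                pHaus ((k : ℝ) + 2)
                  ({p : EuclideanSpace ℝ (Fin (k + 1)) × ℝ |
                      ∃ (x : EuclideanSpace ℝ (Fin k)) (t : ℝ),
                        p = ((WithLp.toLp 2 (Fin.snoc x.ofLp (ψ (x, t)) : Fin (k + 1) → ℝ) : EuclideanSpace ℝ (Fin (k + 1))), t)} ∩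
                    pcube p r) ∧
              pHaus ((k : ℝ) + 2)
                  ({p : EuclideanSpace ℝ (Fin (k + 1)) × ℝ |
                      ∃ (x : EuclideanSpace ℝ (Fin k)) (t : ℝ),
                        p = ((WithLp.toLp 2 (Fin.snoc x.ofLp (ψ (x, t)) : Fin (k + 1) → ℝ) : EuclideanSpace ℝ (Fin (k + 1))), t)} ∩
                    pcube p r) ≤ ENNReal.ofReal (M * r ^ (k + 2)) := by
  classical
  set A : ℝ := 1 + b with hA
  set B : ℝ := 2*Real.sqrt k + 2 with hB
  set D : ℝ := 1 + b*(Real.sqrt k + 1) with hD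
  have hsk : (0:ℝ) ≤ Real.sqrt k := Real.sqrt_nonneg _
  have hA1 : 1 ≤ A := by rw [hA]; linarith
  have hB2 : 2 ≤ B := by rw [hB]; linarith
  have hD1 : 1 ≤ D := by
    have h' : 0 ≤ b*(Real.sqrt k + 1) := by positivity
    rw [hD]; linarith
  have hA0 : 0 < A := lt_of_lt_of_le one_pos hA1
  have hB0 : 0 < B := lt_of_lt_of_le (by norm_num) hB2
  have hD0 : 0 < D := lt_of_lt_of_le one_pos hD1
  have hAB1 : 1 ≤ A*B := by nlinarith
  have hABD1 : 1 ≤ A*B*D := by nlinarith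
  refine ⟨(A*B*D)^(k+2), one_le_pow₀ hABD1, ?_⟩
  intro ψ hψ p hp r hr
  obtain ⟨x₀, t₀, rfl⟩ := hp
  have hpg : ((WithLp.toLp 2 (Fin.snoc x₀.ofLp (ψ (x₀, t₀)) : Fin (k + 1) → ℝ) : EuclideanSpace ℝ (Fin (k + 1))), t₀) =
      graphMap ψ (x₀, t₀) := rfl
  set Sψ : Set (EuclideanSpace ℝ (Fin (k + 1)) × ℝ) :=
    {p | ∃ (x : EuclideanSpace ℝ (Fin k)) (t : ℝ),
      p = ((WithLp.toLp 2 (Fin.snoc x.ofLp (ψ (x, t)) : Fin (k + 1) → ℝ) : EuclideanSpace ℝ (Fin (k + 1))), t)} with hSS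
  have hη : (0:ℝ) < (k:ℝ)+2 := by positivity
  have hrpow : ∀ x : ℝ≥0∞, x ^ ((k:ℝ)+2) = x ^ (k+2 : ℕ) := by
    intro x; rw [← ENNReal.rpow_natCast]; norm_num
  set ρ : ℝ := r / D with hρdef
  have hρ : 0 < ρ := div_pos hr hD0
  constructor
  · -- lower bound
    have c1 : pHaus ((k:ℝ)+2) (pcube ((x₀, t₀) : EuclideanSpace ℝ (Fin k) × ℝ) ρ) ≤
        pHaus ((k:ℝ)+2) (projMap '' (Sψ ∩ pcube (graphMap ψ (x₀, t₀)) r)) :=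
      pHaus_mono _ (pcube_subset_proj_graph hb hψ x₀ t₀ hr)
    have c2 : pHaus ((k:ℝ)+2) (projMap '' (Sψ ∩ pcube (graphMap ψ (x₀, t₀)) r)) ≤
        ENNReal.ofReal 1 ^ ((k:ℝ)+2) *
          pHaus ((k:ℝ)+2) (Sψ ∩ pcube (graphMap ψ (x₀, t₀)) r) :=
      pHaus_image_le one_pos (fun p q => projMap_lipschitz p q) hη _
    have c3 : ENNReal.ofReal ρ ^ ((k:ℝ)+2) ≤
        pHaus ((k:ℝ)+2) (pcube ((x₀, t₀) : EuclideanSpace ℝ (Fin k) × ℝ) ρ) :=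
      pHaus_pcube_lower _ hρ
    rw [ENNReal.ofReal_one, ENNReal.one_rpow, one_mul] at c2
    have main : ENNReal.ofReal ρ ^ ((k:ℝ)+2) ≤
        pHaus ((k:ℝ)+2) (Sψ ∩ pcube (graphMap ψ (x₀, t₀)) r) := c3.trans (c1.trans c2)
    rw [hpg]
    refine le_trans ?_ main
    rw [hrpow, ← ENNReal.ofReal_pow hρ.le]
    apply ENNReal.ofReal_le_ofReal
    have hDM : D^(k+2) ≤ (A*B*D)^(k+2) := by
      apply pow_le_pow_left₀ hD0.le
      nlinarith
    have hinv : ((A*B*D)^(k+2))⁻¹ ≤ (D^(k+2))⁻¹ := by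
      apply inv_anti₀ (by positivity) hDM
    calc ((A*B*D)^(k+2))⁻¹ * r^(k+2) ≤ (D^(k+2))⁻¹ * r^(k+2) :=
          mul_le_mul_of_nonneg_right hinv (by positivity)
      _ = ρ^(k+2) := by rw [hρdef, div_pow]; ring
  · -- upper bound
    rw [hpg]
    have c1 : pHaus ((k:ℝ)+2) (Sψ ∩ pcube (graphMap ψ (x₀, t₀)) r) ≤
        pHaus ((k:ℝ)+2) (graphMap ψ '' pcube ((x₀, t₀) : EuclideanSpace ℝ (Fin k) × ℝ) r) :=
      pHaus_mono _ (graph_inter_subset ψ x₀ t₀ r)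
    have c2 : pHaus ((k:ℝ)+2)
        (graphMap ψ '' pcube ((x₀, t₀) : EuclideanSpace ℝ (Fin k) × ℝ) r) ≤
        ENNReal.ofReal A ^ ((k:ℝ)+2) *
          pHaus ((k:ℝ)+2) (pcube ((x₀, t₀) : EuclideanSpace ℝ (Fin k) × ℝ) r) :=
      pHaus_image_le hA0 (graphMap_lipschitz hb hψ) hη _
    have c3 := pHaus_pcube_upper ((x₀, t₀) : EuclideanSpace ℝ (Fin k) × ℝ) hr
    calc pHaus ((k:ℝ)+2) (Sψ ∩ pcube (graphMap ψ (x₀, t₀)) r)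
        ≤ ENNReal.ofReal A ^ ((k:ℝ)+2) *
            (ENNReal.ofReal r ^ ((k:ℝ)+2) * ENNReal.ofReal B ^ ((k:ℝ)+2)) :=
          c1.trans (c2.trans (mul_le_mul_right c3 _))
      _ = ENNReal.ofReal ((A*(r*B))^(k+2)) := by
          simp only [hrpow]
          rw [← mul_pow, ← mul_pow, ← ENNReal.ofReal_mul hr.le, ← ENNReal.ofReal_mul hA0.le,
            ENNReal.ofReal_pow (by positivity)]
      _ ≤ ENNReal.ofReal ((A*B*D)^(k+2) * r^(k+2)) := by
          apply ENNReal.ofReal_le_ofReal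
          have h1 : (A*(r*B))^(k+2) = (A*B)^(k+2) * r^(k+2) := by
            rw [← mul_pow]; ring_nf
          rw [h1]
          apply mul_le_mul_of_nonneg_right ?_ (by positivity)
          apply pow_le_pow_left₀ (by positivity)
          nlinarith
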